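/- Reduction of Hitting Set to lock-set race detection is correct: given sets X = {x_1,...,x_n} and Y = {y_1,...,y_n} of Boolean vectors of dimension d, construct a trace σ with threads t_0, t_1, ..., t_d, locks ℓ_1,...,ℓ_n, and variables z_1,...,z_n, where thread t_0 holds all locks ℓ_1,...,ℓ_n while writing each z_k once, and for each j ∈ [d], thread t_j holds exactly the locks {ℓ_i : y_i[j]=0} (as one nested critical section) while writing exactly the variables {z_k : x_k[j]=1}. Then σ has a lock-set race on some variable if and only if there exists x_k ∈ X such that for every y_i ∈ Y there is a coordinate j with x_k[j] = y_i[j] = 1 (i.e., x_k hits all vectors of Y). -/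

import Mathlib

inductive Op : Type
  | read (x : ℕ)
  | write (x : ℕ)
  | acquire (l : ℕ)
  | release (l : ℕ)
  deriving DecidableEq

structure Event where
  tid : ℕ
  op : Op
  deriving DecidableEq

/-- A concurrent trace: a finite sequence of events, each with a thread id and an operation.
Events are identified with their positions `Fin N`; trace order is the order on `Fin N`. -/
structure Trace where
  N : ℕ
  tid : Fin N → ℕ
  op : Fin N → Op

/-- Happens-before: the smallest (reflexive, transitive) order containing thread order and
ordering each release of a lock before every later (in trace order) acquire of that lock. -/
inductive HB (σ : Trace) : Fin σ.N → Fin σ.N → Prop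
  | refl (i : Fin σ.N) : HB σ i i
  | thread {i j : Fin σ.N} : i < j → σ.tid i = σ.tid j → HB σ i j
  | relAcq {i j : Fin σ.N} (l : ℕ) : i < j → σ.op i = Op.release l → σ.op j = Op.acquire l →
      HB σ i j
  | trans {i j k : Fin σ.N} : HB σ i j → HB σ j k → HB σ i k

def accessesVar (σ : Trace) (e : Fin σ.N) (x : ℕ) : Prop :=
  σ.op e = Op.read x ∨ σ.op e = Op.write x

/-- The set of locks held by the thread of `e` at `e`: locks acquired by that thread at or
before `e` and not released by that thread in between. -/
def locksHeld (σ : Trace) (e : Fin σ.N) : Set ℕ :=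
  {l | ∃ i : Fin σ.N, i ≤ e ∧ σ.tid i = σ.tid e ∧ σ.op i = Op.acquire l ∧
    ∀ j : Fin σ.N, i < j → j ≤ e → σ.tid j = σ.tid e → σ.op j ≠ Op.release l}

/-- The lock mentioned by an operation, if any. -/
def opLock : Op → Option ℕ
  | Op.acquire l => some l
  | Op.release l => some l
  | _ => none

/-- The finite set of locks appearing in a trace. -/
def locksOf (σ : Trace) : Finset ℕ :=
  Finset.univ.biUnion (fun i : Fin σ.N => (opLock (σ.op i)).toFinset)

/-- Lock-set race on variable `x`: a conflicting write/access pair on `x` exists, and the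
intersection over all access events of `x` of their held lock-sets is empty. -/
def LockSetRace (σ : Trace) (x : ℕ) : Prop :=
  (∃ e1 e2 : Fin σ.N, σ.tid e1 ≠ σ.tid e2 ∧ σ.op e1 = Op.write x ∧ accessesVar σ e2 x) ∧
  (⋂ e ∈ {e : Fin σ.N | accessesVar σ e x}, locksHeld σ e) = ∅

/-- Build a trace from a list of events. -/
def Trace.ofList (es : List Event) : Trace :=
  ⟨es.length, fun i => (es.get i).tid, fun i => (es.get i).op⟩

/-- A block for thread `t`: acquire the given locks in order, write the given variables,
release the locks in reverse order (one nested critical section). -/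
def hsBlock (t : ℕ) (locks : List ℕ) (vars : List ℕ) : List Event :=
  (locks.map (fun l => ⟨t, Op.acquire l⟩)) ++ (vars.map (fun v => ⟨t, Op.write v⟩)) ++
  (locks.reverse.map (fun l => ⟨t, Op.release l⟩))

/-- The Hitting-Set-to-lock-set trace: thread `0` writes every `z_k` while holding all locks
`ℓ_1, …, ℓ_n`; for each `j ∈ [d]`, thread `j+1` writes exactly `{z_k : X k j = 1}` while
holding exactly the locks `{ℓ_i : Y i j = 0}`. -/
def hsTrace {n d : ℕ} (X Y : Fin n → Fin d → Bool) : Trace :=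
  Trace.ofList
    (hsBlock 0 ((List.finRange n).map Fin.val) ((List.finRange n).map Fin.val) ++
     (((List.finRange d).map (fun j =>
        hsBlock (j.val + 1)
          (((List.finRange n).filter (fun i => Y i j = false)).map Fin.val)
          (((List.finRange n).filter (fun k => X k j = true)).map Fin.val))).flatten))

section Aux

/-! ### Block structure lemmas -/

lemma hsBlock_length (t : ℕ) (L V : List ℕ) :
    (hsBlock t L V).length = L.length + V.length + L.length := by
  simp [hsBlock]; ring

lemma mem_hsBlock_tid {t : ℕ} {L V : List ℕ} {e : Event} (h : e ∈ hsBlock t L V) :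
    e.tid = t := by
  simp only [hsBlock, List.mem_append, List.mem_map] at h
  rcases h with (⟨l, _, rfl⟩ | ⟨v, _, rfl⟩) | ⟨l, _, rfl⟩ <;> rfl

lemma mem_hsBlock_write {t : ℕ} {L V : List ℕ} {e : Event} (h : e ∈ hsBlock t L V)
    {v : ℕ} (hw : e.op = Op.write v) : v ∈ V := by
  simp only [hsBlock, List.mem_append, List.mem_map] at h
  rcases h with (⟨l, _, rfl⟩ | ⟨v', hv', rfl⟩) | ⟨l, _, rfl⟩ <;> simp_all

lemma mem_hsBlock_acquire {t : ℕ} {L V : List ℕ} {e : Event} (h : e ∈ hsBlock t L V)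
    {l : ℕ} (hw : e.op = Op.acquire l) : l ∈ L := by
  simp only [hsBlock, List.mem_append, List.mem_map, List.mem_reverse] at h
  rcases h with (⟨l', hl', rfl⟩ | ⟨v', _, rfl⟩) | ⟨l', hl', rfl⟩ <;> simp_all

lemma mem_hsBlock_not_read {t : ℕ} {L V : List ℕ} {e : Event} (h : e ∈ hsBlock t L V)
    (x : ℕ) : e.op ≠ Op.read x := by
  simp only [hsBlock, List.mem_append, List.mem_map] at h
  rcases h with (⟨l, _, rfl⟩ | ⟨v', _, rfl⟩) | ⟨l, _, rfl⟩ <;> simp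

lemma write_mem_hsBlock {t : ℕ} {L V : List ℕ} {v : ℕ} (hv : v ∈ V) :
    (⟨t, Op.write v⟩ : Event) ∈ hsBlock t L V := by
  simp only [hsBlock, List.mem_append, List.mem_map]
  exact Or.inl (Or.inr ⟨v, hv, rfl⟩)

lemma hsBlock_get_acq {t : ℕ} {L V : List ℕ} {q : ℕ} (hq : q < L.length)
    (h' : q < (hsBlock t L V).length) :
    (hsBlock t L V)[q] = ⟨t, Op.acquire (L[q])⟩ := by
  simp [hsBlock, List.getElem_append, hq]

lemma hsBlock_op_not_release {t : ℕ} {L V : List ℕ} {q : ℕ}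
    (h2 : q < L.length + V.length) (h' : q < (hsBlock t L V).length) (l : ℕ) :
    ((hsBlock t L V)[q]).op ≠ Op.release l := by
  rcases lt_or_ge q L.length with hq | hq
  · rw [hsBlock_get_acq hq h']; simp
  · have : (hsBlock t L V)[q] = ⟨t, Op.write (V[q - L.length]'(by omega))⟩ := by
      have h2' : q - L.length < V.length := by omega
      simp [hsBlock, List.getElem_append, Nat.not_lt.mpr hq, h2']
    rw [this]; simp

lemma hsBlock_write_region {t : ℕ} {L V : List ℕ} {q : ℕ}
    (h' : q < (hsBlock t L V).length) {v : ℕ}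
    (hw : ((hsBlock t L V)[q]).op = Op.write v) :
    L.length ≤ q ∧ q < L.length + V.length := by
  have hlen := hsBlock_length t L V
  rcases lt_or_ge q L.length with hq | hq
  · rw [hsBlock_get_acq hq h'] at hw; simp at hw
  · rcases lt_or_ge q (L.length + V.length) with hq2 | hq2
    · exact ⟨hq, hq2⟩
    · exfalso
      have : (hsBlock t L V)[q] =
          ⟨t, Op.release (L.reverse[q - (L.length + V.length)]'(by simp; simp [hsBlock] at h'; omega))⟩ := by
        have : ¬ (q - L.length < V.length) := by omega
        simp [hsBlock, List.getElem_append, Nat.not_lt.mpr hq, this]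
        congr 1
        omega
      rw [this] at hw; simp at hw

end Aux

section Aux2

lemma get_middle {A M B : List Event} {t : ℕ}
    (hA : ∀ e ∈ A, e.tid ≠ t) (hB : ∀ e ∈ B, e.tid ≠ t)
    {q : ℕ} (hq : q < (A ++ M ++ B).length) (ht : ((A ++ M ++ B)[q]).tid = t) :
    ∃ r : ℕ, ∃ hr : r < M.length, q = A.length + r ∧ (A ++ M ++ B)[q] = M[r] := by
  have hlen : (A ++ M ++ B).length = A.length + M.length + B.length := by
    simp; ring
  rcases lt_or_ge q A.length with h1 | h1
  · exfalso
    have hg : (A ++ M ++ B)[q] = A[q] := by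
      simp [List.getElem_append, h1]
    exact hA _ (hg ▸ List.getElem_mem h1) ht
  · rcases lt_or_ge q (A.length + M.length) with h2 | h2
    · have hr : q - A.length < M.length := by omega
      refine ⟨q - A.length, hr, by omega, ?_⟩
      have h1' : ¬ q < A.length := by omega
      simp [List.getElem_append, h1', hr]
    · exfalso
      have h1' : ¬ q < A.length := by omega
      have h2' : ¬ q - A.length < M.length := by omega
      have hb : q - A.length - M.length < B.length := by omega
      have hg : (A ++ M ++ B)[q] = B[q - A.length - M.length]'hb := by
        simp [List.getElem_append, h1', h2']
      exact hB _ (hg ▸ List.getElem_mem hb) ht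

lemma get_middle_idx (A : List Event) {M : List Event} (B : List Event) {r : ℕ}
    (hr : r < M.length) :
    (A ++ M ++ B)[A.length + r]'(by simp; omega) = M[r] := by
  have h1 : ¬ A.length + r < A.length := by omega
  have h3 : A.length + r - A.length = r := by omega
  simp [List.getElem_append, h1, h3, hr]

lemma locksHeld_block {A B : List Event} {t : ℕ} {L V : List ℕ}
    (hA : ∀ e ∈ A, e.tid ≠ t) (hB : ∀ e ∈ B, e.tid ≠ t)
    {es : List Event} (hes : es = A ++ hsBlock t L V ++ B)
    (p : Fin (Trace.ofList es).N)
    (hp : (Trace.ofList es).tid p = t)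
    {v : ℕ} (hop : (Trace.ofList es).op p = Op.write v) :
    locksHeld (Trace.ofList es) p = {l | l ∈ L} := by
  subst hes
  have tid_eq : ∀ q : Fin (Trace.ofList (A ++ hsBlock t L V ++ B)).N,
      (Trace.ofList (A ++ hsBlock t L V ++ B)).tid q =
        ((A ++ hsBlock t L V ++ B)[q.val]'q.isLt).tid := fun q => rfl
  have op_eq : ∀ q : Fin (Trace.ofList (A ++ hsBlock t L V ++ B)).N,
      (Trace.ofList (A ++ hsBlock t L V ++ B)).op q =
        ((A ++ hsBlock t L V ++ B)[q.val]'q.isLt).op := fun q => rfl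
  have hlenM : (hsBlock t L V).length = L.length + V.length + L.length := hsBlock_length t L V
  obtain ⟨r, hr, hpr, hgetp⟩ := get_middle hA hB p.isLt (by rw [← tid_eq]; exact hp)
  have hwp : ((hsBlock t L V)[r]'hr).op = Op.write v := by rw [← hgetp, ← op_eq]; exact hop
  obtain ⟨hreg1, hreg2⟩ := hsBlock_write_region hr hwp
  ext l
  simp only [locksHeld, Set.mem_setOf_eq]
  constructor
  · rintro ⟨i, hile, hti, hacq, -⟩
    have hti' : ((A ++ hsBlock t L V ++ B)[i.val]'i.isLt).tid = t := by
      rw [← tid_eq, hti, hp]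
    obtain ⟨ri, hri, hir, hgeti⟩ := get_middle hA hB i.isLt hti'
    have hacq' : ((hsBlock t L V)[ri]'hri).op = Op.acquire l := by
      rw [← hgeti, ← op_eq]; exact hacq
    exact mem_hsBlock_acquire (List.getElem_mem hri) hacq'
  · intro hl
    obtain ⟨q0, hq0, hq0l⟩ := List.mem_iff_getElem.mp hl
    have hq0M : q0 < (hsBlock t L V).length := by omega
    have hiN : A.length + q0 < (A ++ hsBlock t L V ++ B).length := by simp; omega
    refine ⟨⟨A.length + q0, hiN⟩, ?_, ?_, ?_, ?_⟩
    · exact Fin.le_def.mpr (by simp; omega)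
    · rw [tid_eq, tid_eq]
      show ((A ++ hsBlock t L V ++ B)[A.length + q0]'hiN).tid =
        ((A ++ hsBlock t L V ++ B)[p.val]'p.isLt).tid
      rw [get_middle_idx A B hq0M, hgetp, mem_hsBlock_tid (List.getElem_mem hq0M),
        mem_hsBlock_tid (List.getElem_mem hr)]
    · rw [op_eq]
      show ((A ++ hsBlock t L V ++ B)[A.length + q0]'hiN).op = Op.acquire l
      rw [get_middle_idx A B hq0M, hsBlock_get_acq hq0 hq0M]
      simp [hq0l]
    · intro j hij hjp htj hrel
      have htj' : ((A ++ hsBlock t L V ++ B)[j.val]'j.isLt).tid = t := by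
        rw [← tid_eq, htj, hp]
      obtain ⟨rj, hrj, hjr, hgetj⟩ := get_middle hA hB j.isLt htj'
      have hjple : j.val ≤ p.val := Fin.le_def.mp hjp
      have hrjle : rj < L.length + V.length := by omega
      exact hsBlock_op_not_release hrjle hrj l (by rw [← hgetj, ← op_eq]; exact hrel)

lemma exists_pos {es : List Event} {e : Event} (he : e ∈ es) :
    ∃ p : Fin (Trace.ofList es).N,
      (Trace.ofList es).tid p = e.tid ∧ (Trace.ofList es).op p = e.op := by
  obtain ⟨q, hq, hqe⟩ := List.mem_iff_getElem.mp he
  exact ⟨⟨q, hq⟩, by simp [Trace.ofList, hqe], by simp [Trace.ofList, hqe]⟩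

lemma pos_mem (es : List Event) (p : Fin (Trace.ofList es).N) :
    (⟨(Trace.ofList es).tid p, (Trace.ofList es).op p⟩ : Event) ∈ es := by
  have h : (⟨(Trace.ofList es).tid p, (Trace.ofList es).op p⟩ : Event) = es.get p := rfl
  rw [h]
  exact List.get_mem es p

end Aux2

section Aux3

/-- The locks of thread 0 (all of them). -/
def hsL0 (n : ℕ) : List ℕ := (List.finRange n).map Fin.val

/-- Locks of thread `j+1`. -/
def hsLock {n d : ℕ} (Y : Fin n → Fin d → Bool) (j : Fin d) : List ℕ :=
  ((List.finRange n).filter (fun i => Y i j = false)).map Fin.val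

/-- Variables written by thread `j+1`. -/
def hsVar {n d : ℕ} (X : Fin n → Fin d → Bool) (j : Fin d) : List ℕ :=
  ((List.finRange n).filter (fun k => X k j = true)).map Fin.val

/-- The block of thread `j+1`. -/
def hsBlk {n d : ℕ} (X Y : Fin n → Fin d → Bool) (j : Fin d) : List Event :=
  hsBlock (j.val + 1) (hsLock Y j) (hsVar X j)

/-- The full event list of the reduction trace. -/
def hsList {n d : ℕ} (X Y : Fin n → Fin d → Bool) : List Event :=
  hsBlock 0 (hsL0 n) (hsL0 n) ++ ((List.finRange d).map (hsBlk X Y)).flatten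

lemma hsTrace_eq {n d : ℕ} (X Y : Fin n → Fin d → Bool) :
    hsTrace X Y = Trace.ofList (hsList X Y) := rfl

lemma mem_hsL0 {n : ℕ} {l : ℕ} : l ∈ hsL0 n ↔ l < n := by
  constructor
  · rintro h
    simp only [hsL0, List.mem_map, List.mem_finRange, true_and] at h
    obtain ⟨i, rfl⟩ := h
    exact i.isLt
  · intro h
    simp only [hsL0, List.mem_map]
    exact ⟨⟨l, h⟩, List.mem_finRange _, rfl⟩

lemma val_mem_hsLock {n d : ℕ} {Y : Fin n → Fin d → Bool} {j : Fin d} {i : Fin n} :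
    (i : ℕ) ∈ hsLock Y j ↔ Y i j = false := by
  simp only [hsLock, List.mem_map, List.mem_filter, List.mem_finRange, true_and,
    decide_eq_true_eq]
  constructor
  · rintro ⟨i', hi', hval⟩
    rwa [← Fin.val_injective hval]
  · intro h
    exact ⟨i, h, rfl⟩

lemma mem_hsVar {n d : ℕ} {X : Fin n → Fin d → Bool} {j : Fin d} {z : ℕ} :
    z ∈ hsVar X j ↔ ∃ k : Fin n, z = (k : ℕ) ∧ X k j = true := by
  simp only [hsVar, List.mem_map, List.mem_filter, List.mem_finRange, true_and,
    decide_eq_true_eq]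
  constructor
  · rintro ⟨k, hk, rfl⟩; exact ⟨k, rfl, hk⟩
  · rintro ⟨k, rfl, hk⟩; exact ⟨k, hk, rfl⟩

lemma mem_hsList {n d : ℕ} {X Y : Fin n → Fin d → Bool} {e : Event} :
    e ∈ hsList X Y ↔
      e ∈ hsBlock 0 (hsL0 n) (hsL0 n) ∨ ∃ j : Fin d, e ∈ hsBlk X Y j := by
  simp only [hsList, List.mem_append, List.mem_flatten, List.mem_map]
  constructor
  · rintro (h | ⟨bl, ⟨j, _, rfl⟩, hbl⟩)
    · exact Or.inl h
    · exact Or.inr ⟨j, hbl⟩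
  · rintro (h | ⟨j, hj⟩)
    · exact Or.inl h
    · exact Or.inr ⟨hsBlk X Y j, ⟨j, List.mem_finRange _, rfl⟩, hj⟩

lemma hsList_decomp0 {n d : ℕ} (X Y : Fin n → Fin d → Bool) :
    ∃ A B : List Event,
      hsList X Y = A ++ hsBlock 0 (hsL0 n) (hsL0 n) ++ B ∧
      (∀ e ∈ A, e.tid ≠ 0) ∧ (∀ e ∈ B, e.tid ≠ 0) := by
  refine ⟨[], ((List.finRange d).map (hsBlk X Y)).flatten, by simp [hsList], by simp, ?_⟩
  intro e he
  simp only [List.mem_flatten, List.mem_map] at he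
  obtain ⟨bl, ⟨j, _, rfl⟩, hbl⟩ := he
  rw [mem_hsBlock_tid hbl]
  omega

lemma hsList_decompj {n d : ℕ} (X Y : Fin n → Fin d → Bool) (j : Fin d) :
    ∃ A B : List Event,
      hsList X Y = A ++ hsBlock (j.val + 1) (hsLock Y j) (hsVar X j) ++ B ∧
      (∀ e ∈ A, e.tid ≠ j.val + 1) ∧ (∀ e ∈ B, e.tid ≠ j.val + 1) := by
  obtain ⟨s, t2, hst⟩ := List.append_of_mem (List.mem_finRange j)
  have hnd : (List.finRange d).Nodup := List.nodup_finRange d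
  rw [hst, List.nodup_append] at hnd
  have hjs : j ∉ s := fun h => hnd.2.2 j h j List.mem_cons_self rfl
  have hjt : j ∉ t2 := fun h => (List.nodup_cons.mp hnd.2.1).1 h
  refine ⟨hsBlock 0 (hsL0 n) (hsL0 n) ++ (s.map (hsBlk X Y)).flatten,
          (t2.map (hsBlk X Y)).flatten, ?_, ?_, ?_⟩
  · rw [hsList, hst]
    simp [hsBlk, List.append_assoc]
  · intro e he
    rcases List.mem_append.mp he with h0 | hs'
    · rw [mem_hsBlock_tid h0]; omega
    · simp only [List.mem_flatten, List.mem_map] at hs'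
      obtain ⟨bl, ⟨j', hj', rfl⟩, hbl⟩ := hs'
      rw [mem_hsBlock_tid hbl]
      have : j' ≠ j := fun h => hjs (h ▸ hj')
      have := Fin.val_ne_of_ne this
      omega
  · intro e he
    simp only [List.mem_flatten, List.mem_map] at he
    obtain ⟨bl, ⟨j', hj', rfl⟩, hbl⟩ := he
    rw [mem_hsBlock_tid hbl]
    have : j' ≠ j := fun h => hjt (h ▸ hj')
    have := Fin.val_ne_of_ne this
    omega

lemma hsList_no_read {n d : ℕ} {X Y : Fin n → Fin d → Bool} {e : Event}
    (he : e ∈ hsList X Y) (x : ℕ) : e.op ≠ Op.read x := by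
  rcases mem_hsList.mp he with h | ⟨j, h⟩
  · exact mem_hsBlock_not_read h x
  · exact mem_hsBlock_not_read h x

end Aux3

/-- The Hitting-Set-to-lock-set reduction is correct: the constructed trace
has a lock-set race on some variable iff some `x_k ∈ X` hits all vectors of `Y`. -/
theorem hs_reduction_correct {n d : ℕ} (X Y : Fin n → Fin d → Bool) :
    (∃ z : ℕ, LockSetRace (hsTrace X Y) z) ↔
    ∃ k : Fin n, ∀ i : Fin n, ∃ j : Fin d, X k j = true ∧ Y i j = true := by
  rw [hsTrace_eq]
  constructor
  · rintro ⟨z, ⟨e1, e2, hne, hw1, hacc2⟩, hint⟩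
    have he1mem := pos_mem (hsList X Y) e1
    have hzlt : z < n := by
      rcases mem_hsList.mp he1mem with h | ⟨j, h⟩
      · exact mem_hsL0.mp (mem_hsBlock_write h hw1)
      · obtain ⟨k, rfl, -⟩ := mem_hsVar.mp (mem_hsBlock_write h hw1)
        exact k.isLt
    refine ⟨⟨z, hzlt⟩, fun i => ?_⟩
    by_contra hno
    exact Set.eq_empty_iff_forall_notMem.mp hint (i : ℕ) (by
      simp only [Set.mem_iInter, Set.mem_setOf_eq]
      intro e he
      have hemem := pos_mem (hsList X Y) e
      have hwz : (Trace.ofList (hsList X Y)).op e = Op.write z := by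
        rcases he with hr | hw
        · exact absurd hr (hsList_no_read hemem z)
        · exact hw
      rcases mem_hsList.mp hemem with h | ⟨j, h⟩
      · have ht0 : (Trace.ofList (hsList X Y)).tid e = 0 := mem_hsBlock_tid h
        obtain ⟨A, B, hAB, hA, hB⟩ := hsList_decomp0 X Y
        rw [locksHeld_block hA hB hAB e ht0 hwz]
        exact mem_hsL0.mpr i.isLt
      · have htj : (Trace.ofList (hsList X Y)).tid e = j.val + 1 := mem_hsBlock_tid h
        obtain ⟨k', hk', hXk'⟩ := mem_hsVar.mp (mem_hsBlock_write h hwz)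
        have hkk : k' = (⟨z, hzlt⟩ : Fin n) := Fin.val_injective hk'.symm
        have hXkj : X ⟨z, hzlt⟩ j = true := hkk ▸ hXk'
        obtain ⟨A, B, hAB, hA, hB⟩ := hsList_decompj X Y j
        rw [locksHeld_block hA hB hAB e htj hwz]
        have hY : Y i j = false := by
          rcases Bool.eq_false_or_eq_true (Y i j) with h' | h'
          · exact absurd ⟨j, hXkj, h'⟩ hno
          · exact h'
        exact val_mem_hsLock.mpr hY)
  · rintro ⟨k, hk⟩
    refine ⟨(k : ℕ), ?_, ?_⟩
    · obtain ⟨j, hX, hY⟩ := hk k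
      have h1 : (⟨0, Op.write (k : ℕ)⟩ : Event) ∈ hsList X Y :=
        mem_hsList.mpr (Or.inl (write_mem_hsBlock (mem_hsL0.mpr k.isLt)))
      have h2 : (⟨j.val + 1, Op.write (k : ℕ)⟩ : Event) ∈ hsList X Y :=
        mem_hsList.mpr (Or.inr ⟨j, write_mem_hsBlock (mem_hsVar.mpr ⟨k, rfl, hX⟩)⟩)
      obtain ⟨p1, ht1, ho1⟩ := exists_pos h1
      obtain ⟨p2, ht2, ho2⟩ := exists_pos h2
      exact ⟨p1, p2, by rw [ht1, ht2]; simp, ho1, Or.inr ho2⟩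
    · rw [Set.eq_empty_iff_forall_notMem]
      intro l hl
      simp only [Set.mem_iInter, Set.mem_setOf_eq] at hl
      have h1 : (⟨0, Op.write (k : ℕ)⟩ : Event) ∈ hsList X Y :=
        mem_hsList.mpr (Or.inl (write_mem_hsBlock (mem_hsL0.mpr k.isLt)))
      obtain ⟨p1, ht1, ho1⟩ := exists_pos h1
      have hl1 := hl p1 (Or.inr ho1)
      obtain ⟨A, B, hAB, hA, hB⟩ := hsList_decomp0 X Y
      rw [locksHeld_block hA hB hAB p1 ht1 ho1] at hl1
      have hlt : l < n := mem_hsL0.mp hl1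
      obtain ⟨j, hX, hY⟩ := hk ⟨l, hlt⟩
      have h2 : (⟨j.val + 1, Op.write (k : ℕ)⟩ : Event) ∈ hsList X Y :=
        mem_hsList.mpr (Or.inr ⟨j, write_mem_hsBlock (mem_hsVar.mpr ⟨k, rfl, hX⟩)⟩)
      obtain ⟨p2, ht2, ho2⟩ := exists_pos h2
      have hl2 := hl p2 (Or.inr ho2)
      obtain ⟨A2, B2, hAB2, hA2, hB2⟩ := hsList_decompj X Y j
      rw [locksHeld_block hA2 hB2 hAB2 p2 ht2 ho2] at hl2
      have hYf : Y ⟨l, hlt⟩ j = false :=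
        val_mem_hsLock.mp (show ((⟨l, hlt⟩ : Fin n) : ℕ) ∈ hsLock Y j from hl2)
      rw [hY] at hYf
      simp at hYf
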